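/- Let a1, a2 ≥ 0 with (a1,a2) ≠ (0,0). For any compatible pair (S1,S2) on the maximal Dyck path D_{a1,a2}, either |S1| < a2 or |S2| < a1. -/

import Mathlib

open scoped Classical
noncomputable section

namespace Dyck

/-- The edges of the maximal Dyck path `D_{a,b}`: `a` horizontal edges
`h_1, …, h_a` (0-indexed here) and `b` vertical edges `v_1, …, v_b`. -/
abbrev Edge (a b : ℕ) := Fin a ⊕ Fin b

/-- The height of the horizontal edge `h_{j+1}` of `D_{a,b}` is `⌊j·b/a⌋`. -/
def ht (a b : ℕ) (j : Fin a) : ℕ := j.1 * b / a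

/-- The depth of the vertical edge `v_{j+1}` of `D_{a,b}` is `⌈(j+1)·a/b⌉`. -/
def dep (a b : ℕ) (j : Fin b) : ℕ := ((j.1 + 1) * a + b - 1) / b

/-- The position (0-indexed) of an edge along the maximal Dyck path `D_{a,b}`:
a horizontal edge `h_{j+1}` is preceded by `j` horizontal edges and by `ht j`
vertical edges; a vertical edge `v_{j+1}` is preceded by `j` vertical edges and
by `dep j` horizontal edges. -/
def pos (a b : ℕ) : Edge a b → ℕ
  | Sum.inl j => j.1 + ht a b j
  | Sum.inr j => j.1 + dep a b j

/-- Cyclic distance from `e` to `f` along the closed loop `D_{a,b}`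
(the endpoints `(0,0)` and `(a,b)` are identified). -/
def dd (a b : ℕ) (e f : Edge a b) : ℕ := (pos a b f + (a + b) - pos a b e) % (a + b)

/-- The (cyclic) subpath of `D_{a,b}` from `e` to `f`, both included. -/
def subpath (a b : ℕ) (e f : Edge a b) : Finset (Edge a b) :=
  Finset.univ.filter fun g => dd a b e g ≤ dd a b e f

/-- The number of horizontal edges in a set of edges. -/
def hcount (a b : ℕ) (s : Finset (Edge a b)) : ℕ := (s.filter fun e => e.isLeft = true).card

/-- The number of vertical edges in a set of edges. -/
def vcount (a b : ℕ) (s : Finset (Edge a b)) : ℕ := (s.filter fun e => e.isRight = true).card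

/-- The sum of a horizontal grading over the horizontal edges of a set of edges. -/
def hsum (a b : ℕ) (S1 : Fin a → ℕ) (s : Finset (Edge a b)) : ℕ :=
  ∑ e ∈ s, Sum.elim S1 (fun _ => 0) e

/-- The sum of a vertical grading over the vertical edges of a set of edges. -/
def vsum (a b : ℕ) (S2 : Fin b → ℕ) (s : Finset (Edge a b)) : ℕ :=
  ∑ e ∈ s, Sum.elim (fun _ => 0) S2 e

/-- The horizontal shadow statistic `f_{S1}` of a set of edges. -/
def fH (a b : ℕ) (S1 : Fin a → ℕ) (s : Finset (Edge a b)) : ℤ :=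
  (hsum a b S1 s : ℤ) - (vcount a b s : ℤ)

/-- The vertical shadow statistic `f_{S2}` of a set of edges. -/
def fV (a b : ℕ) (S2 : Fin b → ℕ) (s : Finset (Edge a b)) : ℤ :=
  (vsum a b S2 s : ℤ) - (hcount a b s : ℤ)

/-- Horizontal grading condition (HGC) for the pair `(h, v)`: there is an edge `e`
with `he` a proper subpath of `hv` and `|(he)_2| = Σ_{h' ∈ (he)_1} S1(h')`. -/
def HGC (a b : ℕ) (S1 : Fin a → ℕ) (h : Fin a) (v : Fin b) : Prop :=
  ∃ e : Edge a b, dd a b (.inl h) e < dd a b (.inl h) (.inr v) ∧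
    vcount a b (subpath a b (.inl h) e) = hsum a b S1 (subpath a b (.inl h) e)

/-- Vertical grading condition (VGC) for the pair `(h, v)`: there is an edge `e`
with `ev` a proper subpath of `hv` and `|(ev)_1| = Σ_{v' ∈ (ev)_2} S2(v')`. -/
def VGC (a b : ℕ) (S2 : Fin b → ℕ) (h : Fin a) (v : Fin b) : Prop :=
  ∃ e : Edge a b, 0 < dd a b (.inl h) e ∧ dd a b (.inl h) e ≤ dd a b (.inl h) (.inr v) ∧
    hcount a b (subpath a b e (.inr v)) = vsum a b S2 (subpath a b e (.inr v))

/-- A pair of gradings `(S1, S2)` on `D_{a,b}` is compatible. -/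
def Compatible (a b : ℕ) (S1 : Fin a → ℕ) (S2 : Fin b → ℕ) : Prop :=
  ∀ (h : Fin a) (v : Fin b), HGC a b S1 h v ∨ VGC a b S2 h v

/-- `e` is a "balanced" endpoint for the horizontal edge `h`:
`|(he)_2| = Σ_{h' ∈ (he)_1} S1(h')`. -/
def balH (a b : ℕ) (S1 : Fin a → ℕ) (h : Fin a) (e : Edge a b) : Prop :=
  vcount a b (subpath a b (.inl h) e) = hsum a b S1 (subpath a b (.inl h) e)

/-- The local shadow `sh(h; S1)`: the vertical edges of the shortest balanced
subpath starting at `h` (all of `D2` if there is none). -/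
def shH (a b : ℕ) (S1 : Fin a → ℕ) (h : Fin a) : Finset (Fin b) :=
  Finset.univ.filter fun v =>
    ∀ e : Edge a b, balH a b S1 h e → dd a b (.inl h) (.inr v) ≤ dd a b (.inl h) e

/-- The shadow `sh(S1) = ⋃_h sh(h; S1)`. -/
def shadowH (a b : ℕ) (S1 : Fin a → ℕ) : Finset (Fin b) :=
  Finset.univ.filter fun v => ∃ h : Fin a, v ∈ shH a b S1 h

/-- The vertical edges removed from `sh(S1)` to form the remote shadow: for each
`d ∈ [1,a]`, the (up to) `S1(h_d)` vertical edges of depth `d` immediately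
following `h_d`. -/
def removedH (a b : ℕ) (S1 : Fin a → ℕ) : Finset (Fin b) :=
  Finset.univ.filter fun v => ∃ hd : Fin a, hd.1 + 1 = dep a b v ∧
    (Finset.univ.filter fun v' : Fin b => dep a b v' = dep a b v ∧ v'.1 < v.1).card < S1 hd

/-- The remote shadow `rsh(S1)`. -/
def rshH (a b : ℕ) (S1 : Fin a → ℕ) : Finset (Fin b) :=
  shadowH a b S1 \ removedH a b S1

/-- `e` is a "balanced" starting point for the vertical edge `v`:
`|(ev)_1| = Σ_{v' ∈ (ev)_2} S2(v')`. -/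
def balV (a b : ℕ) (S2 : Fin b → ℕ) (e : Edge a b) (v : Fin b) : Prop :=
  hcount a b (subpath a b e (.inr v)) = vsum a b S2 (subpath a b e (.inr v))

/-- The local shadow `sh(v; S2)`: the horizontal edges of the shortest balanced
subpath ending at `v` (all of `D1` if there is none). -/
def shV (a b : ℕ) (S2 : Fin b → ℕ) (v : Fin b) : Finset (Fin a) :=
  Finset.univ.filter fun h =>
    ∀ e : Edge a b, balV a b S2 e v → dd a b (.inl h) (.inr v) ≤ dd a b e (.inr v)

/-- The shadow `sh(S2) = ⋃_v sh(v; S2)`. -/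
def shadowV (a b : ℕ) (S2 : Fin b → ℕ) : Finset (Fin a) :=
  Finset.univ.filter fun h => ∃ v : Fin b, h ∈ shV a b S2 v

/-- The horizontal edges removed from `sh(S2)` to form the remote shadow: for each
`ℓ ∈ [1,b]`, the (up to) `S2(v_ℓ)` horizontal edges of height `ℓ−1` immediately
preceding `v_ℓ`. -/
def removedV (a b : ℕ) (S2 : Fin b → ℕ) : Finset (Fin a) :=
  Finset.univ.filter fun h => ∃ vl : Fin b, vl.1 = ht a b h ∧
    (Finset.univ.filter fun h' : Fin a => ht a b h' = ht a b h ∧ h.1 < h'.1).card < S2 vl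

/-- The remote shadow `rsh(S2)`. -/
def rshV (a b : ℕ) (S2 : Fin b → ℕ) : Finset (Fin a) :=
  shadowV a b S2 \ removedV a b S2

/-- The support of a grading. -/
def suppH (a : ℕ) (S1 : Fin a → ℕ) : Finset (Fin a) := Finset.univ.filter fun h => S1 h ≠ 0
def suppV (b : ℕ) (S2 : Fin b → ℕ) : Finset (Fin b) := Finset.univ.filter fun v => S2 v ≠ 0
section AuxSeq

/-- Window sum of an integer sequence: the sum of `f` over positions `[p, p+ℓ)`. -/
def Wd (f : ℕ → ℤ) (p ℓ : ℕ) : ℤ := ∑ t ∈ Finset.range ℓ, f (p + t)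

theorem Wd_succ (f : ℕ → ℤ) (p ℓ : ℕ) : Wd f p (ℓ + 1) = Wd f p ℓ + f (p + ℓ) :=
  Finset.sum_range_succ _ _

theorem Wd_one (f : ℕ → ℤ) (p : ℕ) : Wd f p 1 = f p := by simp [Wd]

theorem Wd_add (f : ℕ → ℤ) (p ℓ m : ℕ) :
    Wd f p (ℓ + m) = Wd f p ℓ + Wd f (p + ℓ) m := by
  induction m with
  | zero => simp [Wd]
  | succ m ih =>
      rw [← Nat.add_assoc, Wd_succ, ih, Wd_succ, add_assoc,
        show p + ℓ + m = p + (ℓ + m) from Nat.add_assoc p ℓ m]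

theorem exists_last_argmin (f : ℕ → ℤ) (lo hi : ℕ) (hle : lo ≤ hi) :
    ∃ k, lo ≤ k ∧ k ≤ hi ∧ (∀ m, lo ≤ m → m ≤ hi → f k ≤ f m) ∧
      ∀ m, k < m → m ≤ hi → f k < f m := by
  have hne : (Finset.Icc lo hi).Nonempty := ⟨lo, Finset.mem_Icc.2 ⟨le_refl _, hle⟩⟩
  obtain ⟨c, hc, hceq⟩ := Finset.exists_mem_eq_inf' hne f
  have htne : ((Finset.Icc lo hi).filter fun m => f m = (Finset.Icc lo hi).inf' hne f).Nonempty :=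
    ⟨c, Finset.mem_filter.2 ⟨hc, hceq.symm⟩⟩
  set t := (Finset.Icc lo hi).filter fun m => f m = (Finset.Icc lo hi).inf' hne f with ht
  have hkt := t.max'_mem htne
  simp only [ht, Finset.mem_filter, Finset.mem_Icc] at hkt
  refine ⟨t.max' htne, hkt.1.1, hkt.1.2, ?_, ?_⟩
  · intro m hm1 hm2
    rw [hkt.2]
    exact Finset.inf'_le f (Finset.mem_Icc.2 ⟨hm1, hm2⟩)
  · intro m hm1 hm2
    have hmem : m ∈ Finset.Icc lo hi := Finset.mem_Icc.2 ⟨le_trans hkt.1.1 (le_of_lt hm1), hm2⟩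
    have hle' : f (t.max' htne) ≤ f m := hkt.2 ▸ Finset.inf'_le f hmem
    rcases lt_or_eq_of_le hle' with h | h
    · exact h
    · exfalso
      have : m ∈ t := by
        rw [ht, Finset.mem_filter]
        exact ⟨hmem, by rw [← h, hkt.2]⟩
      exact absurd (Finset.le_max' t m this) (by omega)

theorem exists_first_argmax (f : ℕ → ℤ) (lo hi : ℕ) (hle : lo ≤ hi) :
    ∃ k, lo ≤ k ∧ k ≤ hi ∧ (∀ m, lo ≤ m → m ≤ hi → f m ≤ f k) ∧
      ∀ m, lo ≤ m → m < k → f m < f k := by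
  have hne : (Finset.Icc lo hi).Nonempty := ⟨lo, Finset.mem_Icc.2 ⟨le_refl _, hle⟩⟩
  obtain ⟨c, hc, hceq⟩ := Finset.exists_mem_eq_sup' hne f
  have htne : ((Finset.Icc lo hi).filter fun m => f m = (Finset.Icc lo hi).sup' hne f).Nonempty :=
    ⟨c, Finset.mem_filter.2 ⟨hc, hceq.symm⟩⟩
  set t := (Finset.Icc lo hi).filter fun m => f m = (Finset.Icc lo hi).sup' hne f with ht
  have hkt := t.min'_mem htne
  simp only [ht, Finset.mem_filter, Finset.mem_Icc] at hkt
  refine ⟨t.min' htne, hkt.1.1, hkt.1.2, ?_, ?_⟩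
  · intro m hm1 hm2
    rw [hkt.2]
    exact Finset.le_sup' f (Finset.mem_Icc.2 ⟨hm1, hm2⟩)
  · intro m hm1 hm2
    have hmem : m ∈ Finset.Icc lo hi := Finset.mem_Icc.2 ⟨hm1, le_trans (le_of_lt hm2) hkt.1.2⟩
    have hle' : f m ≤ f (t.min' htne) := hkt.2 ▸ Finset.le_sup' f hmem
    rcases lt_or_eq_of_le hle' with h | h
    · exact h
    · exfalso
      have : m ∈ t := by
        rw [ht, Finset.mem_filter]
        exact ⟨hmem, by rw [h, hkt.2]⟩
      exact absurd (t.min'_le m this) (by omega)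

theorem mod_inj_small {N x y : ℕ} (hx : x < y + N) (hy : y < N) (hmod : x % N = y % N) :
    x = y := by
  rcases Nat.lt_or_ge x N with h | h
  · rwa [Nat.mod_eq_of_lt h, Nat.mod_eq_of_lt hy] at hmod
  · rw [Nat.mod_eq_sub_mod h] at hmod
    have hxN : x - N < y := by omega
    rw [Nat.mod_eq_of_lt (lt_trans hxN hy), Nat.mod_eq_of_lt hy] at hmod
    omega

end AuxSeq

section Geo

variable {a b : ℕ}

theorem pos_lt (e : Edge a b) : pos a b e < a + b := by
  cases e with
  | inl j =>
    have ha : 0 < a := j.pos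
    rcases Nat.eq_zero_or_pos b with hb | hb
    · subst hb
      have : j.1 * 0 / a = 0 := by simp
      simp only [pos, ht, this]
      omega
    · have h1 : j.1 * b / a < b := by
        rw [Nat.div_lt_iff_lt_mul ha]
        have : j.1 * b < a * b := Nat.mul_lt_mul_of_lt_of_le j.2 (le_refl b) hb
        calc j.1 * b < a * b := this
          _ ≤ b * a := by rw [Nat.mul_comm]
      simp only [pos, ht]
      have := j.2
      omega
  | inr j =>
    have hb : 0 < b := j.pos
    have h1 : dep a b j < a + 1 := by
      unfold dep
      rw [Nat.div_lt_iff_lt_mul hb]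
      have h2 : (j.1 + 1) * a ≤ b * a := Nat.mul_le_mul_right a j.2
      have key : ∀ u w : ℕ, u ≤ w → 1 ≤ b → u + b - 1 < w * 1 + b := by intros; omega
      calc (j.1 + 1) * a + b - 1 < b * a * 1 + b := key _ _ h2 hb
        _ = (a + 1) * b := by ring
    simp only [pos]
    have := j.2
    omega

theorem pos_injective : Function.Injective (pos a b) := by
  have hmonol : ∀ (i j : Fin a), i.1 < j.1 → pos a b (Sum.inl i) < pos a b (Sum.inl j) := by
    intro i j hij
    simp only [pos, ht]
    have : i.1 * b / a ≤ j.1 * b / a :=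
      Nat.div_le_div_right (Nat.mul_le_mul_right b (le_of_lt hij))
    omega
  have hmonor : ∀ (i j : Fin b), i.1 < j.1 → pos a b (Sum.inr i) < pos a b (Sum.inr j) := by
    intro i j hij
    simp only [pos, dep]
    have : ((i.1 + 1) * a + b - 1) / b ≤ ((j.1 + 1) * a + b - 1) / b := by
      apply Nat.div_le_div_right
      have : (i.1 + 1) * a ≤ (j.1 + 1) * a := Nat.mul_le_mul_right a (by omega)
      omega
    omega
  have hcross : ∀ (j : Fin a) (i : Fin b), pos a b (Sum.inl j) ≠ pos a b (Sum.inr i) := by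
    intro j i
    have ha : 0 < a := j.pos
    have hb : 0 < b := i.pos
    rcases le_or_gt ((i.1 + 1) * a) (j.1 * b) with hc | hc
    · -- pos (inl j) > pos (inr i)
      have h1 : i.1 + 1 ≤ j.1 * b / a := (Nat.le_div_iff_mul_le ha).2 hc
      have h2 : dep a b i ≤ j.1 := by
        have : dep a b i < j.1 + 1 := by
          unfold dep
          rw [Nat.div_lt_iff_lt_mul hb]
          have key : ∀ u w : ℕ, u ≤ w → 1 ≤ b → u + b - 1 < w + 1 * b := by intros; omega
          calc (i.1 + 1) * a + b - 1 < j.1 * b + 1 * b := key _ _ hc hb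
            _ = (j.1 + 1) * b := by ring
        omega
      simp only [pos, ht]
      omega
    · -- pos (inr i) > pos (inl j)
      have h1 : j.1 * b / a ≤ i.1 := by
        have : j.1 * b / a < i.1 + 1 := by
          rw [Nat.div_lt_iff_lt_mul ha]
          calc j.1 * b < (i.1 + 1) * a := hc
            _ ≤ (i.1 + 1) * a := le_refl _
        omega
      have h2 : j.1 + 1 ≤ dep a b i := by
        unfold dep
        rw [Nat.le_div_iff_mul_le hb]
        have h3 : (j.1 + 1) * b = j.1 * b + b := Nat.succ_mul j.1 b
        have h4 : 0 < (i.1 + 1) * a := Nat.mul_pos (Nat.succ_pos _) ha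
        omega
      simp only [pos, ht]
      omega
  intro e f hef
  cases e with
  | inl j =>
    cases f with
    | inl j' =>
      congr 1
      apply Fin.ext
      rcases lt_trichotomy j.1 j'.1 with h | h | h
      · exact absurd hef (Nat.ne_of_lt (hmonol j j' h))
      · exact h
      · exact absurd hef.symm (Nat.ne_of_lt (hmonol j' j h))
    | inr i => exact absurd hef (hcross j i)
  | inr i =>
    cases f with
    | inl j => exact absurd hef.symm (hcross j i)
    | inr i' =>
      congr 1
      apply Fin.ext
      rcases lt_trichotomy i.1 i'.1 with h | h | h
      · exact absurd hef (Nat.ne_of_lt (hmonor i i' h))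
      · exact h
      · exact absurd hef.symm (Nat.ne_of_lt (hmonor i' i h))


/-- The position map as an equivalence with `Fin (a+b)`. -/
def posEquiv (a b : ℕ) : Edge a b ≃ Fin (a + b) :=
  Equiv.ofBijective (fun e => ⟨pos a b e, pos_lt e⟩)
    ((Fintype.bijective_iff_injective_and_card _).2
      ⟨fun e f hef => pos_injective (congrArg Fin.val hef), by simp⟩)

/-- The edge at a given (cyclic) position. -/
def edgeAt (a b : ℕ) (hN : 0 < a + b) (i : ℕ) : Edge a b :=
  (posEquiv a b).symm ⟨i % (a + b), Nat.mod_lt i hN⟩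

theorem pos_edgeAt (hN : 0 < a + b) (i : ℕ) : pos a b (edgeAt a b hN i) = i % (a + b) :=
  congrArg Fin.val ((posEquiv a b).apply_symm_apply ⟨i % (a + b), Nat.mod_lt i hN⟩)

theorem edgeAt_pos (hN : 0 < a + b) (e : Edge a b) : edgeAt a b hN (pos a b e) = e := by
  apply (posEquiv a b).injective
  rw [edgeAt, Equiv.apply_symm_apply]
  exact Fin.ext (show pos a b e % (a + b) = pos a b e from Nat.mod_eq_of_lt (pos_lt e))

theorem edgeAt_congr (hN : 0 < a + b) {i j : ℕ} (hij : i % (a + b) = j % (a + b)) :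
    edgeAt a b hN i = edgeAt a b hN j := by
  unfold edgeAt
  congr 1
  exact Fin.ext hij

theorem zmod_ab_zero (a b : ℕ) : ((a : ZMod (a + b)) + (b : ZMod (a + b))) = 0 := by
  rw [← Nat.cast_add, ZMod.natCast_self]

theorem dd_lt (hN : 0 < a + b) (e f : Edge a b) : dd a b e f < a + b := Nat.mod_lt _ hN

/-- key modular computation: `(pos e + dd e f) % N = pos f % N`. -/
theorem pos_add_dd (hN : 0 < a + b) (e f : Edge a b) :
    (pos a b e + dd a b e f) % (a + b) = pos a b f % (a + b) := by
  have hcast : ((pos a b e + dd a b e f : ℕ) : ZMod (a + b))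
      = ((pos a b f : ℕ) : ZMod (a + b)) := by
    unfold dd
    have he : pos a b e ≤ pos a b f + (a + b) := by have := pos_lt (e : Edge a b); omega
    push_cast [ZMod.natCast_mod, Nat.cast_sub he]
    linear_combination zmod_ab_zero a b
  exact (ZMod.natCast_eq_natCast_iff _ _ _).1 hcast

theorem edgeAt_add_dd (hN : 0 < a + b) (e f : Edge a b) :
    edgeAt a b hN (pos a b e + dd a b e f) = f := by
  have h := edgeAt_congr hN (pos_add_dd hN e f)
  rw [h, edgeAt_pos hN]

theorem dd_edgeAt (hN : 0 < a + b) {i j : ℕ} (hij : i ≤ j) :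
    dd a b (edgeAt a b hN i) (edgeAt a b hN j) = (j - i) % (a + b) := by
  unfold dd
  rw [pos_edgeAt hN, pos_edgeAt hN]
  have h1 : i % (a + b) < a + b := Nat.mod_lt i hN
  have hcast : ((j % (a + b) + (a + b) - i % (a + b) : ℕ) : ZMod (a + b))
      = ((j - i : ℕ) : ZMod (a + b)) := by
    have h2 : i % (a + b) ≤ j % (a + b) + (a + b) := by omega
    push_cast [ZMod.natCast_mod, Nat.cast_sub h2, Nat.cast_sub hij]
    linear_combination zmod_ab_zero a b
  exact (ZMod.natCast_eq_natCast_iff _ _ _).1 hcast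

theorem dd_triangle (hN : 0 < a + b) {e f g : Edge a b} (hef : dd a b e f ≤ dd a b e g) :
    dd a b e f + dd a b f g = dd a b e g := by
  have h1 : dd a b f g < a + b := dd_lt hN f g
  have h2 : dd a b e g < a + b := dd_lt hN e g
  have hcast : ((dd a b e f + dd a b f g : ℕ) : ZMod (a + b))
      = ((dd a b e g : ℕ) : ZMod (a + b)) := by
    unfold dd
    have hh1 : pos a b e ≤ pos a b f + (a + b) := by have := pos_lt (e : Edge a b); omega
    have hh2 : pos a b f ≤ pos a b g + (a + b) := by have := pos_lt (f : Edge a b); omega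
    have hh3 : pos a b e ≤ pos a b g + (a + b) := by have := pos_lt (e : Edge a b); omega
    push_cast [ZMod.natCast_mod, Nat.cast_sub hh1, Nat.cast_sub hh2, Nat.cast_sub hh3]
    linear_combination zmod_ab_zero a b
  have hmod : (dd a b e f + dd a b f g) % (a + b) = dd a b e g % (a + b) :=
    (ZMod.natCast_eq_natCast_iff _ _ _).1 hcast
  exact mod_inj_small (by omega) h2 hmod


end Geo

section Seq

variable {a b : ℕ}

/-- The horizontal weight of an edge: `S1` on horizontal edges, `-1` on vertical ones. -/
def XFun (S1 : Fin a → ℕ) : Edge a b → ℤ := Sum.elim (fun j => (S1 j : ℤ)) fun _ => -1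

/-- The vertical weight of an edge: `-1` on horizontal edges, `S2` on vertical ones. -/
def YFun (S2 : Fin b → ℕ) : Edge a b → ℤ := Sum.elim (fun _ => (-1 : ℤ)) fun j => (S2 j : ℤ)

/-- An edge weight read along positions. -/
def ES (a b : ℕ) (hN : 0 < a + b) (F : Edge a b → ℤ) : ℕ → ℤ := fun i => F (edgeAt a b hN i)

theorem ES_congr (hN : 0 < a + b) (F : Edge a b → ℤ) {i j : ℕ}
    (hij : i % (a + b) = j % (a + b)) : ES a b hN F i = ES a b hN F j :=
  congrArg F (edgeAt_congr hN hij)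

theorem Wd_ES_congr (hN : 0 < a + b) (F : Edge a b → ℤ) {p q : ℕ}
    (hpq : p % (a + b) = q % (a + b)) (ℓ : ℕ) :
    Wd (ES a b hN F) p ℓ = Wd (ES a b hN F) q ℓ := by
  apply Finset.sum_congr rfl
  intro t _
  exact ES_congr hN F (Nat.ModEq.add_right t hpq)

theorem Wd_ES_rot (hN : 0 < a + b) (F : Edge a b → ℤ) (p : ℕ) :
    Wd (ES a b hN F) p (a + b) = Wd (ES a b hN F) 0 (a + b) := by
  induction p with
  | zero => rfl
  | succ p ih =>
    rw [← ih]
    have h1 : Wd (ES a b hN F) p (1 + (a + b))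
        = Wd (ES a b hN F) p 1 + Wd (ES a b hN F) (p + 1) (a + b) := Wd_add _ _ _ _
    have h2 : Wd (ES a b hN F) p ((a + b) + 1)
        = Wd (ES a b hN F) p (a + b) + ES a b hN F (p + (a + b)) := Wd_succ _ _ _
    have h3 : ES a b hN F (p + (a + b)) = ES a b hN F p :=
      ES_congr hN F (Nat.add_mod_right p (a + b))
    have h4 : (1 : ℕ) + (a + b) = (a + b) + 1 := by omega
    rw [h4] at h1
    rw [h2, h3, Wd_one] at h1
    linarith

theorem Wd_ES_shift (hN : 0 < a + b) (F : Edge a b → ℤ) {m : ℕ} (hm : a + b ≤ m) :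
    Wd (ES a b hN F) 0 m = Wd (ES a b hN F) 0 (a + b) + Wd (ES a b hN F) 0 (m - (a + b)) := by
  have h1 : Wd (ES a b hN F) 0 ((a + b) + (m - (a + b)))
      = Wd (ES a b hN F) 0 (a + b) + Wd (ES a b hN F) (0 + (a + b)) (m - (a + b)) :=
    Wd_add _ _ _ _
  rw [show (a + b) + (m - (a + b)) = m from by omega] at h1
  rw [h1]
  congr 1
  apply Wd_ES_congr
  simp

/-- The subpath from `e` to `f` as an image of an initial segment of positions. -/
theorem subpath_eq_image (hN : 0 < a + b) (e f : Edge a b) :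
    subpath a b e f = (Finset.range (dd a b e f + 1)).image
      (fun t => edgeAt a b hN (pos a b e + t)) := by
  ext g
  simp only [subpath, Finset.mem_filter, Finset.mem_univ, true_and, Finset.mem_image,
    Finset.mem_range]
  constructor
  · intro hg
    exact ⟨dd a b e g, by omega, edgeAt_add_dd hN e g⟩
  · rintro ⟨t, ht, rfl⟩
    have htN : t < a + b := lt_of_lt_of_le ht (Nat.succ_le_of_lt (dd_lt hN e f))
    have h1 : dd a b e (edgeAt a b hN (pos a b e + t)) = t := by
      have h2 := dd_edgeAt hN (show pos a b e ≤ pos a b e + t from Nat.le_add_right _ _)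
      rw [edgeAt_pos hN] at h2
      rw [h2, show pos a b e + t - pos a b e = t from by omega, Nat.mod_eq_of_lt htN]
    omega

theorem sum_subpath (hN : 0 < a + b) (e f : Edge a b) (F : Edge a b → ℤ) :
    ∑ g ∈ subpath a b e f, F g = Wd (ES a b hN F) (pos a b e) (dd a b e f + 1) := by
  rw [subpath_eq_image hN e f, Finset.sum_image]
  · rfl
  · intro t ht t' ht' hee
    simp only [Finset.mem_coe, Finset.coe_range, Set.mem_Iio, Finset.mem_range] at ht ht'
    have hlt := dd_lt hN e f
    have h1 : (pos a b e + t) % (a + b) = (pos a b e + t') % (a + b) := by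
      have := congrArg (pos a b) hee
      rwa [pos_edgeAt hN, pos_edgeAt hN] at this
    have h2 : t % (a + b) = t' % (a + b) := Nat.ModEq.add_left_cancel' (pos a b e) h1
    rwa [Nat.mod_eq_of_lt (by omega), Nat.mod_eq_of_lt (by omega)] at h2

theorem sum_XFun (S1 : Fin a → ℕ) (s : Finset (Edge a b)) :
    ∑ g ∈ s, XFun S1 g = (hsum a b S1 s : ℤ) - (vcount a b s : ℤ) := by
  have hv : (vcount a b s : ℤ) = ∑ g ∈ s, (if g.isRight then (1 : ℤ) else 0) := by
    unfold vcount
    rw [Finset.card_filter]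
    push_cast
    apply Finset.sum_congr rfl
    intro g _
    by_cases h : g.isRight <;> simp [h]
  have hh : (hsum a b S1 s : ℤ)
      = ∑ g ∈ s, (Sum.elim (fun j => (S1 j : ℤ)) (fun _ => (0 : ℤ)) g) := by
    unfold hsum
    push_cast
    apply Finset.sum_congr rfl
    intro g _
    cases g <;> simp
  rw [hh, hv, ← Finset.sum_sub_distrib]
  apply Finset.sum_congr rfl
  intro g _
  cases g <;> simp [XFun]

theorem sum_YFun (S2 : Fin b → ℕ) (s : Finset (Edge a b)) :
    ∑ g ∈ s, YFun S2 g = (vsum a b S2 s : ℤ) - (hcount a b s : ℤ) := by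
  have hv : (hcount a b s : ℤ) = ∑ g ∈ s, (if g.isLeft then (1 : ℤ) else 0) := by
    unfold hcount
    rw [Finset.card_filter]
    push_cast
    apply Finset.sum_congr rfl
    intro g _
    by_cases h : g.isLeft <;> simp [h]
  have hh : (vsum a b S2 s : ℤ)
      = ∑ g ∈ s, (Sum.elim (fun _ => (0 : ℤ)) (fun j => (S2 j : ℤ)) g) := by
    unfold vsum
    push_cast
    apply Finset.sum_congr rfl
    intro g _
    cases g <;> simp
  rw [hh, hv, ← Finset.sum_sub_distrib]
  apply Finset.sum_congr rfl
  intro g _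
  cases g <;> simp [YFun]

theorem Wd_total (hN : 0 < a + b) (F : Edge a b → ℤ) :
    Wd (ES a b hN F) 0 (a + b) = ∑ e : Edge a b, F e := by
  have h1 : Wd (ES a b hN F) 0 (a + b) = ∑ t ∈ Finset.range (a + b), F (edgeAt a b hN t) := by
    unfold Wd ES
    apply Finset.sum_congr rfl
    intro t _
    rw [Nat.zero_add]
  have h2 : ∀ i : Fin (a + b), edgeAt a b hN i.1 = (posEquiv a b).symm i := by
    intro i
    unfold edgeAt
    congr 1
    exact Fin.ext (Nat.mod_eq_of_lt i.2)
  rw [h1, ← Fin.sum_univ_eq_sum_range (fun t => F (edgeAt a b hN t)) (a + b)]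
  calc ∑ i : Fin (a + b), F (edgeAt a b hN i.1)
      = ∑ i : Fin (a + b), F ((posEquiv a b).symm i) := by
        apply Finset.sum_congr rfl; intro i _; rw [h2]
    _ = ∑ e : Edge a b, F e := Equiv.sum_comp (posEquiv a b).symm F

theorem Wd_total_X (hN : 0 < a + b) (S1 : Fin a → ℕ) :
    Wd (ES a b hN (XFun S1)) 0 (a + b) = (∑ j, (S1 j : ℤ)) - b := by
  rw [Wd_total hN, Fintype.sum_sum_type]
  simp [XFun]
  ring

theorem Wd_total_Y (hN : 0 < a + b) (S2 : Fin b → ℕ) :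
    Wd (ES a b hN (YFun S2)) 0 (a + b) = (∑ j, (S2 j : ℤ)) - a := by
  rw [Wd_total hN, Fintype.sum_sum_type]
  simp [YFun]
  ring


/-- Given positions `k` (a horizontal edge) and `k+s` (a vertical edge) such that all
windows of the `X`-weights starting at `k` of length `≤ s` are nonzero and all windows
of the `Y`-weights ending at `k+s` of length `≤ s` are nonzero, the pair of edges at
`k` and `k+s` witnesses incompatibility. -/
theorem build_pair (hN : 0 < a + b) (S1 : Fin a → ℕ) (S2 : Fin b → ℕ)
    (k s : ℕ) (h : Fin a) (v : Fin b) (hs1 : 1 ≤ s) (hsN : s < a + b)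
    (hek : edgeAt a b hN k = Sum.inl h) (hev : edgeAt a b hN (k + s) = Sum.inr v)
    (hX : ∀ ℓ, 1 ≤ ℓ → ℓ ≤ s → Wd (ES a b hN (XFun S1)) k ℓ ≠ 0)
    (hY : ∀ ℓ, 1 ≤ ℓ → ℓ ≤ s → Wd (ES a b hN (YFun S2)) (k + s + 1 - ℓ) ℓ ≠ 0) :
    (∀ ℓ, 1 ≤ ℓ → ℓ ≤ dd a b (Sum.inl h) (Sum.inr v) →
      Wd (ES a b hN (XFun S1)) (pos a b (Sum.inl h)) ℓ ≠ 0) ∧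
    (∀ ℓ, 1 ≤ ℓ → ℓ ≤ dd a b (Sum.inl h) (Sum.inr v) →
      Wd (ES a b hN (YFun S2)) (pos a b (Sum.inr v) + (a + b) + 1 - ℓ) ℓ ≠ 0) := by
  have hph : pos a b (Sum.inl h) = k % (a + b) := by rw [← hek, pos_edgeAt]
  have hpv : pos a b (Sum.inr v) = (k + s) % (a + b) := by rw [← hev, pos_edgeAt]
  have hd : dd a b (Sum.inl h) (Sum.inr v) = s := by
    rw [← hek, ← hev, dd_edgeAt hN (Nat.le_add_right k s),
      show k + s - k = s from by omega, Nat.mod_eq_of_lt hsN]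
  constructor
  · intro ℓ h1 h2
    rw [hd] at h2
    rw [hph, Wd_ES_congr hN (XFun S1) (Nat.mod_mod_of_dvd k dvd_rfl) ℓ]
    exact hX ℓ h1 h2
  · intro ℓ h1 h2
    rw [hd] at h2
    have hmm : ((k + s) % (a + b) + (a + b) + 1 - ℓ) % (a + b)
        = (k + s + 1 - ℓ) % (a + b) := by
      have hc : (((k + s) % (a + b) + (a + b) + 1 - ℓ : ℕ) : ZMod (a + b))
          = ((k + s + 1 - ℓ : ℕ) : ZMod (a + b)) := by
        have e1 : ℓ ≤ (k + s) % (a + b) + (a + b) + 1 := by omega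
        have e2 : ℓ ≤ k + s + 1 := by omega
        push_cast [ZMod.natCast_mod, Nat.cast_sub e1, Nat.cast_sub e2]
        linear_combination zmod_ab_zero a b
      exact (ZMod.natCast_eq_natCast_iff _ _ _).1 hc
    rw [hpv, Wd_ES_congr hN (YFun S2) hmm ℓ]
    exact hY ℓ h1 h2

/-- Case `T1 ≥ 1`. -/
theorem caseA (hN : 0 < a + b) (ha : 0 < a) (hb : 0 < b) (S1 : Fin a → ℕ) (S2 : Fin b → ℕ)
    (hT1 : 1 ≤ Wd (ES a b hN (XFun S1)) 0 (a + b))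
    (hT2 : 0 ≤ Wd (ES a b hN (YFun S2)) 0 (a + b)) :
    ∃ (k s : ℕ) (h : Fin a) (v : Fin b), 1 ≤ s ∧ s < a + b ∧
      edgeAt a b hN k = Sum.inl h ∧ edgeAt a b hN (k + s) = Sum.inr v ∧
      (∀ ℓ, 1 ≤ ℓ → ℓ ≤ s → Wd (ES a b hN (XFun S1)) k ℓ ≠ 0) ∧
      (∀ ℓ, 1 ≤ ℓ → ℓ ≤ s → Wd (ES a b hN (YFun S2)) (k + s + 1 - ℓ) ℓ ≠ 0) := by
  set N := a + b with hNdef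
  set Xs := ES a b hN (XFun S1) with hXs
  set Ys := ES a b hN (YFun S2) with hYs
  have hN2 : 2 ≤ N := by omega
  -- last argmin of partial sums of Xs on [0, N-1]
  obtain ⟨k, hk0, hk1, hkmin, hkstrict⟩ :=
    exists_last_argmin (fun m => Wd Xs 0 m) 0 (N - 1) (by omega)
  have hQshift : ∀ m, N ≤ m → Wd Xs 0 m = Wd Xs 0 N + Wd Xs 0 (m - N) :=
    fun m hm => Wd_ES_shift hN (XFun S1) hm
  have hXk : ∀ ℓ, 1 ≤ ℓ → ℓ ≤ N → 1 ≤ Wd Xs k ℓ := by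
    intro ℓ h1 h2
    have hsplit : Wd Xs 0 (k + ℓ) = Wd Xs 0 k + Wd Xs k ℓ := by
      have := Wd_add Xs 0 k ℓ
      rwa [Nat.zero_add] at this
    rcases le_or_gt (k + ℓ) (N - 1) with hcase | hcase
    · have := hkstrict (k + ℓ) (by omega) hcase
      omega
    · have hge : N ≤ k + ℓ := by omega
      have h3 := hQshift (k + ℓ) hge
      have h4 : k + ℓ - N ≤ N - 1 := by omega
      have h5 := hkmin (k + ℓ - N) (by omega) h4
      omega
  -- the edge at k is horizontal
  have hXk1 : 1 ≤ Xs k := by have := hXk 1 (le_refl 1) (by omega); rwa [Wd_one] at this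
  obtain ⟨h, hek⟩ : ∃ h : Fin a, edgeAt a b hN k = Sum.inl h := by
    rcases hE : edgeAt a b hN k with j | j
    · exact ⟨j, rfl⟩
    · exfalso
      have : Xs k = -1 := by rw [hXs, ES, hE]; rfl
      omega
  have hYk : Ys k = -1 := by rw [hYs, ES, hek]; rfl
  -- first argmax of Y-sums after k
  obtain ⟨s, hs0, hs1, hsmax, hsstrict⟩ :=
    exists_first_argmax (fun t => Wd Ys (k + 1) t) 0 (N - 1) (by omega)
  have hRN : Wd Ys (k + 1) (N - 1) = Wd Ys 0 N + 1 := by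
    have h1 : Wd Ys k N = Wd Ys 0 N := Wd_ES_rot hN (YFun S2) k
    have h2 : Wd Ys k (1 + (N - 1)) = Wd Ys k 1 + Wd Ys (k + 1) (N - 1) := Wd_add _ _ _ _
    rw [show 1 + (N - 1) = N from by omega] at h2
    rw [Wd_one, hYk] at h2
    omega
  have hspos : 1 ≤ s := by
    by_contra hcon
    have hs00 : s = 0 := by omega
    have h9 := hsmax (N - 1) (by omega) (by omega)
    rw [hs00] at h9
    have hz : Wd Ys (k + 1) 0 = 0 := by simp [Wd]
    rw [hz, hRN] at h9
    omega
  have hv1 : 1 ≤ Ys (k + s) := by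
    have h1 : Wd Ys (k + 1) s = Wd Ys (k + 1) (s - 1) + Ys (k + 1 + (s - 1)) := by
      have := Wd_succ Ys (k + 1) (s - 1)
      rwa [show s - 1 + 1 = s from by omega] at this
    have h2 := hsstrict (s - 1) (by omega) (by omega)
    rw [show k + 1 + (s - 1) = k + s from by omega] at h1
    omega
  obtain ⟨v, hev⟩ : ∃ v : Fin b, edgeAt a b hN (k + s) = Sum.inr v := by
    rcases hE : edgeAt a b hN (k + s) with j | j
    · exfalso
      have : Ys (k + s) = -1 := by rw [hYs, ES, hE]; rfl
      omega
    · exact ⟨j, rfl⟩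
  refine ⟨k, s, h, v, hspos, by omega, hek, hev, ?_, ?_⟩
  · intro ℓ h1 h2
    have := hXk ℓ h1 (by omega)
    omega
  · intro ℓ h1 h2
    have h3 : Wd Ys (k + 1) s = Wd Ys (k + 1) (s - ℓ) + Wd Ys (k + 1 + (s - ℓ)) ℓ := by
      have := Wd_add Ys (k + 1) (s - ℓ) ℓ
      rwa [show s - ℓ + ℓ = s from by omega] at this
    have h4 := hsstrict (s - ℓ) (by omega) (by omega)
    rw [show k + 1 + (s - ℓ) = k + s + 1 - ℓ from by omega] at h3
    omega


/-- Case `T2 ≥ 1`. -/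
theorem caseB (hN : 0 < a + b) (ha : 0 < a) (hb : 0 < b) (S1 : Fin a → ℕ) (S2 : Fin b → ℕ)
    (hT1 : 0 ≤ Wd (ES a b hN (XFun S1)) 0 (a + b))
    (hT2 : 1 ≤ Wd (ES a b hN (YFun S2)) 0 (a + b)) :
    ∃ (k s : ℕ) (h : Fin a) (v : Fin b), 1 ≤ s ∧ s < a + b ∧
      edgeAt a b hN k = Sum.inl h ∧ edgeAt a b hN (k + s) = Sum.inr v ∧
      (∀ ℓ, 1 ≤ ℓ → ℓ ≤ s → Wd (ES a b hN (XFun S1)) k ℓ ≠ 0) ∧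
      (∀ ℓ, 1 ≤ ℓ → ℓ ≤ s → Wd (ES a b hN (YFun S2)) (k + s + 1 - ℓ) ℓ ≠ 0) := by
  set N := a + b with hNdef
  set Xs := ES a b hN (XFun S1) with hXs
  set Ys := ES a b hN (YFun S2) with hYs
  have hN2 : 2 ≤ N := by omega
  have hRshift : ∀ m, N ≤ m → Wd Ys 0 m = Wd Ys 0 N + Wd Ys 0 (m - N) :=
    fun m hm => Wd_ES_shift hN (YFun S2) hm
  have hQshift : ∀ m, N ≤ m → Wd Xs 0 m = Wd Xs 0 N + Wd Xs 0 (m - N) :=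
    fun m hm => Wd_ES_shift hN (XFun S1) hm
  -- first argmax of partial sums of Ys on [0, 2N]
  obtain ⟨c, hc0, hc1, hcmax, hcstrict⟩ :=
    exists_first_argmax (fun m => Wd Ys 0 m) 0 (2 * N) (by omega)
  have hcN : N + 1 ≤ c := by
    by_contra hcon
    have hc2 : c ≤ N := by omega
    have h3 := hRshift (c + N) (by omega)
    rw [show c + N - N = c from by omega] at h3
    have h4 := hcmax (c + N) (by omega) (by omega)
    omega
  -- all windows ending at gap c of length ≤ N are ≥ 1
  have hYall : ∀ ℓ, 1 ≤ ℓ → ℓ ≤ N → 1 ≤ Wd Ys (c - ℓ) ℓ := by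
    intro ℓ h1 h2
    have h3 : Wd Ys 0 c = Wd Ys 0 (c - ℓ) + Wd Ys (c - ℓ) ℓ := by
      have := Wd_add Ys 0 (c - ℓ) ℓ
      rw [Nat.zero_add, show c - ℓ + ℓ = c from by omega] at this
      exact this
    have h4 := hcstrict (c - ℓ) (by omega) (by omega)
    omega
  set q := c - 1 with hq
  have hYq : 1 ≤ Ys q := by
    have := hYall 1 (le_refl 1) (by omega)
    rwa [Wd_one] at this
  obtain ⟨v, hev⟩ : ∃ v : Fin b, edgeAt a b hN q = Sum.inr v := by
    rcases hE : edgeAt a b hN q with j | j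
    · exfalso
      have : Ys q = -1 := by rw [hYs, ES, hE]; rfl
      omega
    · exact ⟨j, rfl⟩
  have hXq : Xs q = -1 := by rw [hXs, ES, hev]; rfl
  -- last argmin of partial sums of Xs on [q-N+1, q-1]
  obtain ⟨α, hα0, hα1, hαmin, hαstrict⟩ :=
    exists_last_argmin (fun m => Wd Xs 0 m) (q - N + 1) (q - 1) (by omega)
  set s := q - α with hs
  have hs1 : 1 ≤ s := by omega
  have hsN : s < N := by omega
  have hXsq : Wd Xs 0 α + 1 ≤ Wd Xs 0 q := by
    have h3 := hQshift q (by omega)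
    have h4 : Wd Xs 0 (q - N + 1) = Wd Xs 0 (q - N) + Xs (q - N) := by
      have := Wd_succ Xs 0 (q - N)
      rw [Nat.zero_add] at this
      rwa [show q - N + 1 = q - N + 1 from rfl] at this
    have h5 : Xs (q - N) = Xs q := by
      apply ES_congr hN (XFun S1)
      have : q - N + N = q := by omega
      conv_rhs => rw [← this]
      rw [Nat.add_mod_right]
    have h6 := hαmin (q - N + 1) (le_refl _) (by omega)
    rw [h5, hXq] at h4
    omega
  have hXa : ∀ ℓ, 1 ≤ ℓ → ℓ ≤ s → 1 ≤ Wd Xs α ℓ := by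
    intro ℓ h1 h2
    have hsplit : Wd Xs 0 (α + ℓ) = Wd Xs 0 α + Wd Xs α ℓ := by
      have := Wd_add Xs 0 α ℓ
      rwa [Nat.zero_add] at this
    rcases le_or_gt (α + ℓ) (q - 1) with hcase | hcase
    · have := hαstrict (α + ℓ) (by omega) hcase
      omega
    · have : α + ℓ = q := by omega
      rw [this] at hsplit
      omega
  have hXa1 : 1 ≤ Xs α := by
    have := hXa 1 (le_refl 1) (by omega)
    rwa [Wd_one] at this
  obtain ⟨h, hek⟩ : ∃ h : Fin a, edgeAt a b hN α = Sum.inl h := by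
    rcases hE : edgeAt a b hN α with j | j
    · exact ⟨j, rfl⟩
    · exfalso
      have : Xs α = -1 := by rw [hXs, ES, hE]; rfl
      omega
  refine ⟨α, s, h, v, hs1, hsN, hek, ?_, ?_, ?_⟩
  · rwa [show α + s = q from by omega]
  · intro ℓ h1 h2
    have := hXa ℓ h1 h2
    omega
  · intro ℓ h1 h2
    rw [show α + s + 1 - ℓ = c - ℓ from by omega]
    have := hYall ℓ h1 (by omega)
    omega


/-- successor rule for cyclic partial sums, when the total over a period is `0`. -/
theorem P_succ (hN : 0 < a + b) (F : Edge a b → ℤ)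
    (h0 : Wd (ES a b hN F) 0 (a + b) = 0) (g : ℕ) :
    Wd (ES a b hN F) 0 ((g + 1) % (a + b)) = Wd (ES a b hN F) 0 (g % (a + b)) + ES a b hN F g := by
  set N := a + b with hNdef
  set r := g % N with hr0
  have hr : r < N := Nat.mod_lt g hN
  have hg1 : (g + 1) % N = (r + 1) % N := ((Nat.mod_modEq g N).add_right 1).symm
  have hFr : ES a b hN F r = ES a b hN F g := ES_congr hN F (Nat.mod_modEq g N)
  have h2 : Wd (ES a b hN F) 0 (r + 1) = Wd (ES a b hN F) 0 r + ES a b hN F r := by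
    have := Wd_succ (ES a b hN F) 0 r
    rwa [Nat.zero_add] at this
  rcases lt_or_ge (r + 1) N with hcase | hcase
  · rw [hg1, Nat.mod_eq_of_lt hcase, h2, hFr]
  · have hrN : r + 1 = N := by omega
    have h3 : (g + 1) % N = 0 := by rw [hg1, hrN, Nat.mod_self]
    have h4 : Wd (ES a b hN F) 0 0 = 0 := by simp [Wd]
    rw [hrN] at h2
    rw [h3, h4]
    rw [h0, hFr] at h2
    omega

/-- window sums as differences of cyclic partial sums, when the total is `0`. -/
theorem Wd_eq_P (hN : 0 < a + b) (F : Edge a b → ℤ)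
    (h0 : Wd (ES a b hN F) 0 (a + b) = 0) (p ℓ : ℕ) :
    Wd (ES a b hN F) p ℓ
      = Wd (ES a b hN F) 0 ((p + ℓ) % (a + b)) - Wd (ES a b hN F) 0 (p % (a + b)) := by
  induction ℓ with
  | zero => simp [Wd]
  | succ ℓ ih =>
    rw [Wd_succ, ih, ← Nat.add_assoc, P_succ hN F h0 (p + ℓ)]
    ring

/-- Case `T1 = 0` and `T2 = 0`. -/
theorem caseC (hN : 0 < a + b) (ha : 0 < a) (hb : 0 < b) (S1 : Fin a → ℕ) (S2 : Fin b → ℕ)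
    (hT1 : Wd (ES a b hN (XFun S1)) 0 (a + b) = 0)
    (hT2 : Wd (ES a b hN (YFun S2)) 0 (a + b) = 0) :
    ∃ (k s : ℕ) (h : Fin a) (v : Fin b), 1 ≤ s ∧ s < a + b ∧
      edgeAt a b hN k = Sum.inl h ∧ edgeAt a b hN (k + s) = Sum.inr v ∧
      (∀ ℓ, 1 ≤ ℓ → ℓ ≤ s → Wd (ES a b hN (XFun S1)) k ℓ ≠ 0) ∧
      (∀ ℓ, 1 ≤ ℓ → ℓ ≤ s → Wd (ES a b hN (YFun S2)) (k + s + 1 - ℓ) ℓ ≠ 0) := by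
  set N := a + b with hNdef
  set Xs := ES a b hN (XFun S1) with hXs
  set Ys := ES a b hN (YFun S2) with hYs
  have hN2 : 2 ≤ N := by omega
  set P : ℕ → ℤ := fun g => Wd Xs 0 (g % N) with hP
  set R : ℕ → ℤ := fun g => Wd Ys 0 (g % N) with hR
  have hPsucc : ∀ g, P (g + 1) = P g + Xs g := fun g => P_succ hN (XFun S1) hT1 g
  have hRsucc : ∀ g, R (g + 1) = R g + Ys g := fun g => P_succ hN (YFun S2) hT2 g
  have hWP : ∀ p ℓ, Wd Xs p ℓ = P (p + ℓ) - P p := fun p ℓ => Wd_eq_P hN (XFun S1) hT1 p ℓ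
  have hWR : ∀ p ℓ, Wd Ys p ℓ = R (p + ℓ) - R p := fun p ℓ => Wd_eq_P hN (YFun S2) hT2 p ℓ
  have hPper : ∀ g, P (g + N) = P g := by
    intro g
    simp only [hP]
    rw [Nat.add_mod_right]
  have hRper : ∀ g, R (g + N) = R g := by
    intro g
    simp only [hR]
    rw [Nat.add_mod_right]
  -- global argmax of R
  obtain ⟨β₀, hβ₀0, hβ₀1, hβ₀max, _⟩ := exists_first_argmax R 0 (N - 1) (by omega)
  set β := β₀ + N with hβ
  have hRβ : R β = R β₀ := by rw [hβ, hRper]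
  have hRmax : ∀ g, R g ≤ R β := by
    intro g
    have h1 : R g = R (g % N) := by
      simp only [hR]
      rw [Nat.mod_mod_of_dvd g dvd_rfl]
    rw [h1, hRβ]
    exact hβ₀max (g % N) (by omega) (by have := Nat.mod_lt g hN; omega)
  -- last argmin of P on [β-N, β-1]
  obtain ⟨α, hα0, hα1, hαmin, hαstrict⟩ := exists_last_argmin P (β - N) (β - 1) (by omega)
  -- first argmax of R on [α+1, α+N]
  obtain ⟨β', hβ'0, hβ'1, hβ'max, hβ'strict⟩ := exists_first_argmax R (α + 1) (α + N) (by omega)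
  have hβmem1 : α + 1 ≤ β := by omega
  have hβmem2 : β ≤ α + N := by omega
  have hRβ' : R β = R β' := le_antisymm (hβ'max β hβmem1 hβmem2) (hRmax β')
  have hβ'β : β' ≤ β := by
    by_contra hcon
    have := hβ'strict β hβmem1 (by omega)
    omega
  -- the edge at α is horizontal
  have hXα : 0 ≤ Xs α := by
    have h1 := hPsucc α
    rcases le_or_gt (α + 1) (β - 1) with hcase | hcase
    · have := hαstrict (α + 1) (by omega) hcase
      omega
    · have hq : α = β - 1 := by omega
      have h2 : P (α + 1) = P (β - N) := by
        have h2a := hPper (β - N)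
        rw [show β - N + N = β from by omega] at h2a
        rw [show α + 1 = β from by omega]
        exact h2a
      have h3 := hαmin (β - N) (le_refl _) (by omega)
      omega
  obtain ⟨h, hek⟩ : ∃ h : Fin a, edgeAt a b hN α = Sum.inl h := by
    rcases hE : edgeAt a b hN α with j | j
    · exact ⟨j, rfl⟩
    · exfalso
      have : Xs α = -1 := by rw [hXs, ES, hE]; rfl
      omega
  have hYα : Ys α = -1 := by rw [hYs, ES, hek]; rfl
  -- β' is at least α+2
  have hβ'2 : α + 2 ≤ β' := by
    by_contra hcon
    have hβ'eq : β' = α + 1 := by omega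
    have h1 := hβ'max (α + N) (by omega) (le_refl _)
    rw [hRper] at h1
    have h2 := hRsucc α
    rw [hYα, hβ'eq] at *
    omega
  -- the edge at β'-1 is vertical
  have hYβ' : 1 ≤ Ys (β' - 1) := by
    have h1 := hRsucc (β' - 1)
    rw [show β' - 1 + 1 = β' from by omega] at h1
    have h2 := hβ'strict (β' - 1) (by omega) (by omega)
    omega
  obtain ⟨v, hev⟩ : ∃ v : Fin b, edgeAt a b hN (β' - 1) = Sum.inr v := by
    rcases hE : edgeAt a b hN (β' - 1) with j | j
    · exfalso
      have : Ys (β' - 1) = -1 := by rw [hYs, ES, hE]; rfl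
      omega
    · exact ⟨j, rfl⟩
  set s := β' - 1 - α with hs
  refine ⟨α, s, h, v, by omega, by omega, hek, ?_, ?_, ?_⟩
  · rwa [show α + s = β' - 1 from by omega]
  · intro ℓ h1 h2
    rw [hWP]
    have h3 := hαstrict (α + ℓ) (by omega) (by omega)
    omega
  · intro ℓ h1 h2
    rw [show α + s + 1 - ℓ = β' - ℓ from by omega, hWR,
      show β' - ℓ + ℓ = β' from by omega]
    have h3 := hβ'strict (β' - ℓ) (by omega) (by omega)
    omega

end Seq

/-- **Magnitude bound for compatible pairs.** For any compatible pair `(S1, S2)`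
on `D_{a1,a2}` with `(a1, a2) ≠ (0, 0)`, either `|S1| < a2` or `|S2| < a1`. -/
theorem compatible_magnitude_bound (a1 a2 : ℕ) (h : ¬(a1 = 0 ∧ a2 = 0))
    (S1 : Fin a1 → ℕ) (S2 : Fin a2 → ℕ) (hc : Compatible a1 a2 S1 S2) :
    (∑ e, S1 e) < a2 ∨ (∑ e, S2 e) < a1 := by
  by_contra hcon
  push_neg at hcon
  obtain ⟨hS1, hS2⟩ := hcon
  rcases Nat.eq_zero_or_pos a1 with ha | ha
  · subst ha
    have h0 : (∑ e, S1 e) = 0 := by simp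
    exact h ⟨rfl, by omega⟩
  rcases Nat.eq_zero_or_pos a2 with hb | hb
  · subst hb
    have h0 : (∑ e, S2 e) = 0 := by simp
    omega
  have hN : 0 < a1 + a2 := by omega
  have hT1 : 0 ≤ Wd (ES a1 a2 hN (XFun S1)) 0 (a1 + a2) := by
    rw [Wd_total_X hN S1]
    have hcast : (a2 : ℤ) ≤ ∑ j, (S1 j : ℤ) := by exact_mod_cast hS1
    linarith
  have hT2 : 0 ≤ Wd (ES a1 a2 hN (YFun S2)) 0 (a1 + a2) := by
    rw [Wd_total_Y hN S2]
    have hcast : (a1 : ℤ) ≤ ∑ j, (S2 j : ℤ) := by exact_mod_cast hS2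
    linarith
  obtain ⟨k, s, hh, vv, hs1, hsN, hek, hev, hX, hY⟩ :
      ∃ (k s : ℕ) (h : Fin a1) (v : Fin a2), 1 ≤ s ∧ s < a1 + a2 ∧
        edgeAt a1 a2 hN k = Sum.inl h ∧ edgeAt a1 a2 hN (k + s) = Sum.inr v ∧
        (∀ ℓ, 1 ≤ ℓ → ℓ ≤ s → Wd (ES a1 a2 hN (XFun S1)) k ℓ ≠ 0) ∧
        (∀ ℓ, 1 ≤ ℓ → ℓ ≤ s → Wd (ES a1 a2 hN (YFun S2)) (k + s + 1 - ℓ) ℓ ≠ 0) := by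
    rcases hT1.lt_or_eq with h1 | h1
    · exact caseA hN ha hb S1 S2 (by linarith) hT2
    · rcases hT2.lt_or_eq with h2 | h2
      · exact caseB hN ha hb S1 S2 (le_of_eq h1) (by linarith)
      · exact caseC hN ha hb S1 S2 h1.symm h2.symm
  obtain ⟨condX, condY⟩ := build_pair hN S1 S2 k s hh vv hs1 hsN hek hev hX hY
  rcases hc hh vv with ⟨e, he1, he2⟩ | ⟨e, he0, he1, he2⟩
  · -- HGC leads to a zero X-window, contradiction
    have hzero : Wd (ES a1 a2 hN (XFun S1)) (pos a1 a2 (Sum.inl hh))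
        (dd a1 a2 (Sum.inl hh) e + 1) = 0 := by
      rw [← sum_subpath hN (Sum.inl hh) e (XFun S1), sum_XFun, he2, sub_self]
    exact condX (dd a1 a2 (Sum.inl hh) e + 1) (by omega) (by omega) hzero
  · -- VGC leads to a zero Y-window, contradiction
    have htri := dd_triangle hN he1
    have hddlt := dd_lt hN e (Sum.inr vv)
    have hzero : Wd (ES a1 a2 hN (YFun S2)) (pos a1 a2 e)
        (dd a1 a2 e (Sum.inr vv) + 1) = 0 := by
      rw [← sum_subpath hN e (Sum.inr vv) (YFun S2), sum_YFun, he2, sub_self]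
    have hmod : pos a1 a2 e % (a1 + a2)
        = (pos a1 a2 (Sum.inr vv) + (a1 + a2) + 1 - (dd a1 a2 e (Sum.inr vv) + 1))
            % (a1 + a2) := by
      have hpdZ : ((pos a1 a2 e + dd a1 a2 e (Sum.inr vv) : ℕ) : ZMod (a1 + a2))
          = ((pos a1 a2 (Sum.inr vv) : ℕ) : ZMod (a1 + a2)) :=
        (ZMod.natCast_eq_natCast_iff _ _ _).2 (pos_add_dd hN e (Sum.inr vv))
      have e1 : dd a1 a2 e (Sum.inr vv) + 1
          ≤ pos a1 a2 (Sum.inr vv) + (a1 + a2) + 1 := by omega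
      have e2 : dd a1 a2 e (Sum.inr vv) ≤ pos a1 a2 (Sum.inr vv) + a1 + a2 := by omega
      have hcast : ((pos a1 a2 e : ℕ) : ZMod (a1 + a2))
          = ((pos a1 a2 (Sum.inr vv) + (a1 + a2) + 1 - (dd a1 a2 e (Sum.inr vv) + 1) : ℕ)
              : ZMod (a1 + a2)) := by
        push_cast at hpdZ
        have e3 : pos a1 a2 (Sum.inr vv) + (a1 + a2) + 1 - (dd a1 a2 e (Sum.inr vv) + 1)
            = pos a1 a2 (Sum.inr vv) + a1 + a2 - dd a1 a2 e (Sum.inr vv) := by omega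
        rw [e3, Nat.cast_sub e2]
        push_cast
        linear_combination hpdZ - zmod_ab_zero a1 a2
      exact (ZMod.natCast_eq_natCast_iff _ _ _).1 hcast
    rw [Wd_ES_congr hN (YFun S2) hmod] at hzero
    exact condY (dd a1 a2 e (Sum.inr vv) + 1) (by omega) (by omega) hzero


end Dyck
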